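/- Let p, q, r be distinct points and let S = ∑ θ(p)^A ε_{AB} M^B_C θ(q)^C (creation of two particles joined by matrix M) and T = ∑ θ†(q)_A N^A_B θ(r)^B (transport from r to q), with M, N complex 2×2 matrices and θ, θ† creation/annihilation operators reinterpreted appropriately on the fermionic Fock space. Then the anticommutator algebra yields {S, T}-type composition producing ∑ θ(p)^A ε_{AB} (MN)^B_C θ(r)^C, i.e. concatenation of the matrices along the shared point q. -/

import Mathlib

noncomputable section

/-- The one-particle space `⊕_{x∈X} ℂ^d`: finitely supported `ℂ^d`-valued
functions on the spatial slice `X`. -/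
abbrev OneParticle (X : Type) (d : ℕ) := X →₀ (Fin d → ℂ)

/-- The antisymmetric (fermionic) Fock space over the one-particle space,
realized as the exterior algebra. -/
abbrev FockSpace (X : Type) (d : ℕ) := ExteriorAlgebra ℂ (OneParticle X d)

/-- The one-particle state of a spin component `A` located at the point `x`. -/
def pointState (X : Type) (d : ℕ) (x : X) (A : Fin d) : OneParticle X d :=
  Finsupp.single x (Pi.single A 1)

/-- The creation operator `θ†(x)_A`: exterior multiplication by the
corresponding one-particle state. -/
def cre (X : Type) (d : ℕ) (x : X) (A : Fin d) : Module.End ℂ (FockSpace X d) :=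
  LinearMap.mulLeft ℂ (ExteriorAlgebra.ι ℂ (pointState X d x A))

/-- The coordinate functional extracting the `(x, A)` component. -/
def coordDual (X : Type) (d : ℕ) (x : X) (A : Fin d) :
    Module.Dual ℂ (OneParticle X d) :=
  (LinearMap.proj A).comp
    (Finsupp.lapply x : OneParticle X d →ₗ[ℂ] (Fin d → ℂ))

/-- The annihilation operator `θ(x)^A`: interior product (left contraction)
with the coordinate functional. -/
def ann (X : Type) (d : ℕ) (x : X) (A : Fin d) : Module.End ℂ (FockSpace X d) :=
  CliffordAlgebra.contractLeft (Q := (0 : QuadraticForm ℂ (OneParticle X d)))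
    (coordDual X d x A)


lemma cre_swap (X : Type) (d : ℕ) (x y : X) (A B : Fin d) :
    cre X d x A * cre X d y B = -(cre X d y B * cre X d x A) := by
  refine LinearMap.ext fun z => ?_
  simp only [cre, Module.End.mul_apply, LinearMap.mulLeft_apply, LinearMap.neg_apply,
    ← mul_assoc]
  rw [eq_neg_of_add_eq_zero_left (ExteriorAlgebra.ι_add_mul_swap _ _), neg_mul]

lemma ann_cre (X : Type) (d : ℕ) (x y : X) (A B : Fin d) :
    ann X d x A * cre X d y B =
      (coordDual X d x A (pointState X d y B)) • 1 - cre X d y B * ann X d x A := by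
  refine LinearMap.ext fun z => ?_
  simp only [ann, cre, Module.End.mul_apply, LinearMap.mulLeft_apply, LinearMap.sub_apply,
    LinearMap.smul_apply, Module.End.one_apply]
  exact CliffordAlgebra.contractLeft_ι_mul _ _ _

lemma coordDual_pointState_ne (X : Type) (d : ℕ) {x y : X} (h : y ≠ x) (A B : Fin d) :
    coordDual X d x A (pointState X d y B) = 0 := by
  simp [coordDual, pointState, Finsupp.single_eq_of_ne' h]

lemma coordDual_pointState_same (X : Type) (d : ℕ) (x : X) (A B : Fin d) :
    coordDual X d x A (pointState X d x B) = if A = B then 1 else 0 := by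
  simp [coordDual, pointState, Pi.single_apply]

/-- The antisymmetric ε tensor on spinor indices. -/
def epsM : Matrix (Fin 2) (Fin 2) ℂ := !![0, 1; -1, 0]

set_option maxHeartbeats 4000000 in
/-- Composition of path observables at a shared endpoint concatenates the
holonomy matrices: for distinct points `p, q, r`, the commutator of the
two-particle creator `S = ∑ θ(p)^A ε_{AB} M^B_C θ(q)^C` with the transport
`T = ∑ θ†(q)_A N^A_B θ(r)^B` is the creator joining `p` to `r` by `M·N`. -/
theorem path_observable_composition (X : Type) (p q r : X)
    (hpq : p ≠ q) (hqr : q ≠ r) (hpr : p ≠ r)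
    (M N : Matrix (Fin 2) (Fin 2) ℂ)
    (S T : Module.End ℂ (FockSpace X 2))
    (hS : S = ∑ A : Fin 2, ∑ B : Fin 2, ∑ C : Fin 2,
      (epsM A B * M B C) • (cre X 2 p A * cre X 2 q C))
    (hT : T = ∑ A : Fin 2, ∑ B : Fin 2,
      N A B • (ann X 2 q A * cre X 2 r B)) :
    S * T - T * S = ∑ A : Fin 2, ∑ B : Fin 2, ∑ C : Fin 2,
      (epsM A B * (M * N) B C) • (cre X 2 p A * cre X 2 r C) := by
  subst hS hT
  -- swap rules
  have hqr' : ∀ A B, ann X 2 q A * cre X 2 r B = -(cre X 2 r B * ann X 2 q A) := by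
    intro A B
    rw [ann_cre, coordDual_pointState_ne X 2 hqr.symm, zero_smul, zero_sub]
  have hqp' : ∀ A B, ann X 2 q A * cre X 2 p B = -(cre X 2 p B * ann X 2 q A) := by
    intro A B
    rw [ann_cre, coordDual_pointState_ne X 2 hpq, zero_smul, zero_sub]
  have hqq' : ∀ A B, ann X 2 q A * cre X 2 q B =
      (if A = B then (1:ℂ) else 0) • 1 - cre X 2 q B * ann X 2 q A := by
    intro A B
    rw [ann_cre, coordDual_pointState_same]
  have hqrW : ∀ A B (w : Module.End ℂ (FockSpace X 2)),
      ann X 2 q A * (cre X 2 r B * w) = -(cre X 2 r B * (ann X 2 q A * w)) := by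
    intro A B w; rw [← mul_assoc, hqr', neg_mul (α := Module.End ℂ (FockSpace X 2)), mul_assoc]
  have hqpW : ∀ A B (w : Module.End ℂ (FockSpace X 2)),
      ann X 2 q A * (cre X 2 p B * w) = -(cre X 2 p B * (ann X 2 q A * w)) := by
    intro A B w; rw [← mul_assoc, hqp', neg_mul (α := Module.End ℂ (FockSpace X 2)), mul_assoc]
  have hqqW : ∀ A B (w : Module.End ℂ (FockSpace X 2)),
      ann X 2 q A * (cre X 2 q B * w) =
        (if A = B then (1:ℂ) else 0) • w - cre X 2 q B * (ann X 2 q A * w) := by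
    intro A B w; rw [← mul_assoc, hqq', sub_mul, smul_mul_assoc, one_mul, mul_assoc]
  have hrp : ∀ A B, cre X 2 r A * cre X 2 p B = -(cre X 2 p B * cre X 2 r A) :=
    fun A B => cre_swap X 2 r p A B
  have hrq : ∀ A B, cre X 2 r A * cre X 2 q B = -(cre X 2 q B * cre X 2 r A) :=
    fun A B => cre_swap X 2 r q A B
  have hrpW : ∀ A B (w : Module.End ℂ (FockSpace X 2)),
      cre X 2 r A * (cre X 2 p B * w) = -(cre X 2 p B * (cre X 2 r A * w)) := by
    intro A B w; rw [← mul_assoc, hrp, neg_mul (α := Module.End ℂ (FockSpace X 2)), mul_assoc]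
  have hrqW : ∀ A B (w : Module.End ℂ (FockSpace X 2)),
      cre X 2 r A * (cre X 2 q B * w) = -(cre X 2 q B * (cre X 2 r A * w)) := by
    intro A B w; rw [← mul_assoc, hrq, neg_mul (α := Module.End ℂ (FockSpace X 2)), mul_assoc]
  set_option maxHeartbeats 2000000 in
  simp only [Fin.sum_univ_two, Matrix.mul_apply, epsM, Matrix.cons_val', Matrix.cons_val_zero,
    Matrix.cons_val_one, Matrix.head_cons, Matrix.empty_val', Matrix.cons_val_fin_one,
    Matrix.head_fin_const, zero_mul, zero_smul, zero_add, add_zero, one_mul, neg_mul, neg_mul (α := Module.End ℂ (FockSpace X 2)), neg_smul]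
  set_option maxHeartbeats 2000000 in
  simp only [add_mul, mul_add, neg_mul, mul_neg, smul_mul_assoc, mul_smul_comm, mul_assoc,
    neg_mul (α := Module.End ℂ (FockSpace X 2)), mul_neg (α := Module.End ℂ (FockSpace X 2))]
  set_option maxHeartbeats 2000000 in
  simp only [hqrW, hqpW, hqqW, hqr', hqp', hqq', hrpW, hrqW, hrp, hrq,
    mul_neg, neg_mul, mul_neg (α := Module.End ℂ (FockSpace X 2)), neg_mul (α := Module.End ℂ (FockSpace X 2)), mul_sub, sub_mul, mul_smul_comm, smul_mul_assoc, mul_one,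
    smul_sub, smul_neg, neg_neg]
  set_option maxHeartbeats 2000000 in
  norm_num
  set_option maxHeartbeats 2000000 in
  module

end
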